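/- Let μ₁ and μ₂ be finitely supported probability measures on ℤ, and let π be the monotone coupling of μ₁ and μ₂ with respect to the standard order on ℤ. Let μ₋ and μ₊ be the push-forwards of π by the maps T₋(x,y) = ⌊(x+y)/2⌋ and T₊(x,y) = ⌈(x+y)/2⌉ respectively. Then H(μ₁|m) + H(μ₂|m) ≥ H(μ₋|m) + H(μ₊|m). -/

import Mathlib

open scoped BigOperators ENNReal NNReal

/-- A finitely supported probability measure on `A`, viewed as its density. -/
def IsPMF {A : Type*} (μ : A → ℝ) : Prop :=
  (∀ x, 0 ≤ μ x) ∧ (Function.support μ).Finite ∧ ∑ᶠ x, μ x = 1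

/-- Relative entropy `H(μ | m)` of a finitely supported probability measure with respect to
the counting measure `m`: `∑ₓ μ(x) log μ(x)` (note `Real.log 0 = 0`, so `0 · log 0 = 0`). -/
noncomputable def relEntropy {A : Type*} (μ : A → ℝ) : ℝ :=
  ∑ᶠ x, μ x * Real.log (μ x)

/-- Push-forward `π ∘ T⁻¹` of a (finitely supported) measure `π` by the map `T`. -/
noncomputable def pushforward {A B : Type*} (T : A → B) (π : A → ℝ) : B → ℝ :=
  fun z => ∑ᶠ p ∈ {p : A | T p = z}, π p

/-- Cumulative distribution function `F_μ(x) = μ {g : g ⪯ x}` of `μ` with respect to the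
ordering `r`. -/
noncomputable def cdf {A : Type*} (r : A → A → Prop) (μ : A → ℝ) (x : A) : ℝ :=
  ∑ᶠ g ∈ {g | r g x}, μ g

open Classical in
/-- Generalized inverse `F_μ⁻¹(t) = min {x : F_μ(x) ≥ t}`, the minimum taken with respect to
the ordering `r` (junk value `0` if the minimum does not exist). -/
noncomputable def genInv {A : Type*} [Zero A] (r : A → A → Prop) (μ : A → ℝ) (t : ℝ) : A :=
  if h : ∃ x, t ≤ cdf r μ x ∧ ∀ y, t ≤ cdf r μ y → r x y then h.choose else 0

/-- The monotone coupling of `μ` and `ν` with respect to the ordering `r`: the law of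
`(F_μ⁻¹(U), F_ν⁻¹(U))` where `U` is uniformly distributed on `(0,1)`. -/
noncomputable def monotoneCoupling {A : Type*} [Zero A] (r : A → A → Prop) (μ ν : A → ℝ) :
    A × A → ℝ := fun p =>
  (MeasureTheory.volume.restrict (Set.Ioo (0 : ℝ) 1)
    {t : ℝ | genInv r μ t = p.1 ∧ genInv r ν t = p.2}).toReal

/- ######### auxiliary development ######### -/
open Set MeasureTheory Function Finset

namespace GRST


lemma floor_half (s u : ℤ) : ⌊((s:ℚ))/2⌋ = u ↔ s = 2*u ∨ s = 2*u+1 := by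
  rw [Int.floor_eq_iff, le_div_iff₀ (by norm_num : (0:ℚ) < 2), div_lt_iff₀ (by norm_num : (0:ℚ) < 2)]
  constructor
  · rintro ⟨h1, h2⟩
    have h1' : u*2 ≤ s := by exact_mod_cast h1
    have h2' : s < (u+1)*2 := by exact_mod_cast h2
    omega
  · intro hs
    constructor
    · have : u*2 ≤ s := by omega
      exact_mod_cast this
    · have : s < (u+1)*2 := by omega
      exact_mod_cast this

lemma ceil_half (s u : ℤ) : ⌈((s:ℚ))/2⌉ = u ↔ s = 2*u ∨ s = 2*u-1 := by
  rw [Int.ceil_eq_iff, lt_div_iff₀ (by norm_num : (0:ℚ) < 2), div_le_iff₀ (by norm_num : (0:ℚ) < 2)]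
  constructor
  · rintro ⟨h1, h2⟩
    have h1' : (u-1)*2 < s := by exact_mod_cast h1
    have h2' : s ≤ u*2 := by exact_mod_cast h2
    omega
  · intro hs
    constructor
    · have : (u-1)*2 < s := by omega
      exact_mod_cast this
    · have : s ≤ u*2 := by exact_mod_cast (by omega : s ≤ u*2)
      exact_mod_cast this

lemma xlog_mono {b x c : ℝ} (hb : 0 < b) (hbx : b ≤ x) (hc : 0 ≤ c) :
    b * (Real.log (b+c) - Real.log b) ≤ x * (Real.log (x+c) - Real.log x) := by
  have hx : 0 < x := hb.trans_le hbx
  have hxc : 0 < x + c := by linarith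
  have hbc : 0 < b + c := by linarith
  obtain ⟨L, hL⟩ : ∃ L, L = Real.log (x+c) - Real.log x := ⟨_, rfl⟩
  rw [← hL]
  have hLnn : c / (x+c) ≤ L := by
    have h := Real.log_le_sub_one_of_pos (show (0:ℝ) < x/(x+c) by positivity)
    rw [Real.log_div hx.ne' hxc.ne'] at h
    have he : x/(x+c) - 1 = -(c/(x+c)) := by field_simp; ring
    rw [he] at h
    rw [hL]; linarith
  have hK : Real.log (b+c) - Real.log b ≤ L + c*(x-b)/(b*(x+c)) := by
    have h := Real.log_le_sub_one_of_pos (show (0:ℝ) < (x*(b+c))/(b*(x+c)) by positivity)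
    rw [Real.log_div (by positivity) (by positivity), Real.log_mul hx.ne' hbc.ne',
      Real.log_mul hb.ne' hxc.ne'] at h
    have he : x*(b+c)/(b*(x+c)) - 1 = c*(x-b)/(b*(x+c)) := by field_simp; ring
    rw [he] at h
    rw [hL]; linarith
  have h1 : b * (Real.log (b+c) - Real.log b) ≤ b * L + c*(x-b)/(x+c) := by
    have := mul_le_mul_of_nonneg_left hK hb.le
    have heq : b * (L + c*(x-b)/(b*(x+c))) = b * L + c*(x-b)/(x+c) := by
      field_simp
    linarith [this, heq.le, heq.ge]
  have h2 : c*(x-b)/(x+c) ≤ (x-b) * L := by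
    have hxb : 0 ≤ x - b := by linarith
    have he : c*(x-b)/(x+c) = (x-b) * (c/(x+c)) := by ring
    rw [he]
    exact mul_le_mul_of_nonneg_left hLnn hxb
  have : b * L + (x-b) * L = x * L := by ring
  linarith

lemma delta_nonneg {w₀ A' : ℝ} (hw : 0 < w₀) (hA' : 0 ≤ A') :
    0 ≤ A' * (Real.log (A' + w₀) - Real.log A') + w₀ * (Real.log (A' + w₀) - Real.log w₀) := by
  rcases eq_or_lt_of_le hA' with h0 | h0
  · simp [← h0]
  · have h1 : Real.log A' ≤ Real.log (A' + w₀) := Real.log_le_log h0 (by linarith)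
    have h2 : Real.log w₀ ≤ Real.log (A' + w₀) := Real.log_le_log hw (by linarith)
    nlinarith

lemma delta_ge {w₀ b A' : ℝ} (hw : 0 < w₀) (hb : 0 < b) (hbA : b ≤ A') :
    b * (Real.log (b + w₀) - Real.log b) + w₀ * (Real.log (b + w₀) - Real.log w₀) ≤
    A' * (Real.log (A' + w₀) - Real.log A') + w₀ * (Real.log (A' + w₀) - Real.log w₀) := by
  have h1 := xlog_mono hb hbA hw.le
  have h2 : Real.log (b + w₀) ≤ Real.log (A' + w₀) :=
    Real.log_le_log (by linarith) (by linarith)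
  nlinarith

lemma vol_Ioc_inter {a b : ℝ} (h0 : 0 ≤ a) (h1 : b ≤ 1) :
    (volume (Ioc a b ∩ Ioo (0:ℝ) 1)).toReal = max (b - a) 0 := by
  rcases le_or_gt a b with hab | hab
  · have hsub1 : Ioo a b ⊆ Ioc a b ∩ Ioo (0:ℝ) 1 := by
      intro t ht
      exact ⟨⟨ht.1, ht.2.le⟩, lt_of_le_of_lt h0 ht.1, lt_of_lt_of_le ht.2 h1⟩
    have hm1 : volume (Ioo a b) ≤ volume (Ioc a b ∩ Ioo (0:ℝ) 1) := measure_mono hsub1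
    have hm2 : volume (Ioc a b ∩ Ioo (0:ℝ) 1) ≤ volume (Ioc a b) :=
      measure_mono inter_subset_left
    rw [Real.volume_Ioo] at hm1
    rw [Real.volume_Ioc] at hm2
    have : volume (Ioc a b ∩ Ioo (0:ℝ) 1) = ENNReal.ofReal (b - a) := le_antisymm hm2 hm1
    rw [this, ENNReal.toReal_ofReal (by linarith), max_eq_left (by linarith)]
  · rw [Set.Ioc_eq_empty (not_lt.mpr hab.le), Set.empty_inter]
    simp [max_eq_right (by linarith : b - a ≤ 0)]

section CDF
variable {μ : ℤ → ℝ}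


lemma cdf_eq_sum (h : IsPMF μ) (x : ℤ) :
    cdf (· ≤ ·) μ x = ∑ g ∈ h.2.1.toFinset.filter (· ≤ x), μ g := by
  apply finsum_mem_eq_sum_of_inter_support_eq
  ext g
  simp only [Set.mem_inter_iff, Set.mem_setOf_eq, Finset.coe_filter, Function.mem_support,
    Set.Finite.mem_toFinset]
  tauto

lemma cdf_nonneg (h : IsPMF μ) (x : ℤ) : 0 ≤ cdf (· ≤ ·) μ x := by
  rw [cdf_eq_sum h]
  exact Finset.sum_nonneg fun g _ => h.1 g

lemma cdf_mono (h : IsPMF μ) : Monotone (cdf (· ≤ ·) μ) := by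
  intro x y hxy
  rw [cdf_eq_sum h, cdf_eq_sum h]
  apply Finset.sum_le_sum_of_subset_of_nonneg
  · intro g hg
    simp only [Finset.mem_filter] at hg ⊢
    exact ⟨hg.1, le_trans hg.2 hxy⟩
  · exact fun g _ _ => h.1 g

lemma cdf_le_one (h : IsPMF μ) (x : ℤ) : cdf (· ≤ ·) μ x ≤ 1 := by
  rw [cdf_eq_sum h]
  calc ∑ g ∈ h.2.1.toFinset.filter (· ≤ x), μ g ≤ ∑ g ∈ h.2.1.toFinset, μ g := by
        apply Finset.sum_le_sum_of_subset_of_nonneg (Finset.filter_subset _ _)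
        exact fun g _ _ => h.1 g
    _ = 1 := by rw [← finsum_eq_sum μ h.2.1]; exact h.2.2

lemma cdf_succ (h : IsPMF μ) (x : ℤ) : cdf (· ≤ ·) μ x = cdf (· ≤ ·) μ (x-1) + μ x := by
  classical
  rw [cdf_eq_sum h, cdf_eq_sum h]
  have hsplit : h.2.1.toFinset.filter (· ≤ x) =
      (h.2.1.toFinset.filter (· ≤ x - 1)) ∪ (h.2.1.toFinset.filter (· = x)) := by
    ext g
    simp only [Finset.mem_filter, Finset.mem_union]
    constructor
    · rintro ⟨hg, hle⟩
      rcases eq_or_lt_of_le hle with rfl | hlt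
      · exact Or.inr ⟨hg, rfl⟩
      · exact Or.inl ⟨hg, by omega⟩
    · rintro (⟨hg, hle⟩ | ⟨hg, rfl⟩)
      · exact ⟨hg, by omega⟩
      · exact ⟨hg, le_refl _⟩
  have hdisj : Disjoint (h.2.1.toFinset.filter (· ≤ x - 1)) (h.2.1.toFinset.filter (· = x)) := by
    rw [Finset.disjoint_left]
    intro g hg1 hg2
    simp only [Finset.mem_filter] at hg1 hg2
    omega
  rw [hsplit, Finset.sum_union hdisj]
  congr 1
  by_cases hx : x ∈ h.2.1.toFinset
  · rw [Finset.filter_eq' , if_pos hx, Finset.sum_singleton]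
  · rw [Finset.filter_eq', if_neg hx, Finset.sum_empty]
    have : μ x = 0 := by
      by_contra hne
      exact hx (h.2.1.mem_toFinset.mpr hne)
    linarith

lemma genInv_eq_iff (h : IsPMF μ) {t : ℝ} (ht0 : 0 < t) (ht1 : t ≤ 1) (x : ℤ) :
    genInv (· ≤ ·) μ t = x ↔ cdf (· ≤ ·) μ (x-1) < t ∧ t ≤ cdf (· ≤ ·) μ x := by
  classical
  have hTne : h.2.1.toFinset.Nonempty := by
    by_contra hne
    rw [Finset.not_nonempty_iff_eq_empty] at hne
    have : (1:ℝ) = 0 := by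
      rw [← h.2.2, finsum_eq_sum μ h.2.1, hne, Finset.sum_empty]
    norm_num at this
  set M := h.2.1.toFinset.max' hTne with hM
  set m := h.2.1.toFinset.min' hTne with hm
  have hcdfM : cdf (· ≤ ·) μ M = 1 := by
    rw [cdf_eq_sum h, Finset.filter_true_of_mem (fun g hg => Finset.le_max' _ g hg),
      ← finsum_eq_sum μ h.2.1]
    exact h.2.2
  have hlow : ∀ z : ℤ, t ≤ cdf (· ≤ ·) μ z → m - 1 ≤ z := by
    intro z hz
    by_contra hlt
    push_neg at hlt
    have : cdf (· ≤ ·) μ z = 0 := by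
      rw [cdf_eq_sum h]
      rw [Finset.filter_false_of_mem, Finset.sum_empty]
      intro g hg
      have := Finset.min'_le _ g hg
      omega
    rw [this] at hz; linarith
  have hex : ∃ x0 : ℤ, t ≤ cdf (· ≤ ·) μ x0 ∧ ∀ y, t ≤ cdf (· ≤ ·) μ y → x0 ≤ y := by
    obtain ⟨lb, hlb1, hlb2⟩ := Int.exists_least_of_bdd
      (P := fun z => t ≤ cdf (· ≤ ·) μ z) ⟨m - 1, hlow⟩ ⟨M, by simpa [hcdfM] using ht1⟩
    exact ⟨lb, hlb1, hlb2⟩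
  rw [genInv, dif_pos hex]
  obtain ⟨hc1, hc2⟩ := hex.choose_spec
  constructor
  · rintro rfl
    refine ⟨?_, hc1⟩
    by_contra hh
    push_neg at hh
    have := hc2 _ hh
    omega
  · rintro ⟨hlt, hle⟩
    have h1 := hc2 x hle
    have h2 : x ≤ hex.choose := by
      by_contra hh
      push_neg at hh
      have : cdf (· ≤ ·) μ hex.choose ≤ cdf (· ≤ ·) μ (x-1) := cdf_mono h (by omega)
      linarith
    omega

end CDF

section Coupling
variable {μ₁ μ₂ : ℤ → ℝ}

lemma pi_nonneg (p : ℤ × ℤ) : 0 ≤ monotoneCoupling (· ≤ ·) μ₁ μ₂ p :=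
  ENNReal.toReal_nonneg


lemma level_eq (h₁ : IsPMF μ₁) (h₂ : IsPMF μ₂) (x y : ℤ) :
    {t : ℝ | genInv (· ≤ ·) μ₁ t = x ∧ genInv (· ≤ ·) μ₂ t = y} ∩ Ioo (0:ℝ) 1 =
      Ioc (max (cdf (· ≤ ·) μ₁ (x-1)) (cdf (· ≤ ·) μ₂ (y-1)))
          (min (cdf (· ≤ ·) μ₁ x) (cdf (· ≤ ·) μ₂ y)) ∩ Ioo (0:ℝ) 1 := by
  ext t
  simp only [Set.mem_inter_iff, Set.mem_setOf_eq, Set.mem_Ioo, Set.mem_Ioc, and_congr_left_iff]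
  intro ht
  rw [genInv_eq_iff h₁ ht.1 ht.2.le, genInv_eq_iff h₂ ht.1 ht.2.le]
  constructor
  · rintro ⟨⟨ha1, hb1⟩, ⟨ha2, hb2⟩⟩
    exact ⟨max_lt ha1 ha2, le_min hb1 hb2⟩
  · rintro ⟨ha, hb⟩
    exact ⟨⟨lt_of_le_of_lt (le_max_left _ _) ha, le_trans hb (min_le_left _ _)⟩,
      ⟨lt_of_le_of_lt (le_max_right _ _) ha, le_trans hb (min_le_right _ _)⟩⟩

lemma coupling_eq (h₁ : IsPMF μ₁) (h₂ : IsPMF μ₂) (x y : ℤ) :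
    monotoneCoupling (· ≤ ·) μ₁ μ₂ (x, y) =
      max (min (cdf (· ≤ ·) μ₁ x) (cdf (· ≤ ·) μ₂ y)
        - max (cdf (· ≤ ·) μ₁ (x-1)) (cdf (· ≤ ·) μ₂ (y-1))) 0 := by
  rw [monotoneCoupling, Measure.restrict_apply' measurableSet_Ioo]
  rw [show {t : ℝ | genInv (· ≤ ·) μ₁ t = (x, y).1 ∧ genInv (· ≤ ·) μ₂ t = (x, y).2} ∩
      Ioo (0:ℝ) 1 = _ from level_eq h₁ h₂ x y]
  exact vol_Ioc_inter
    (le_max_of_le_left (cdf_nonneg h₁ _))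
    (le_trans (min_le_left _ _) (cdf_le_one h₁ _))

lemma pi_supp (h₁ : IsPMF μ₁) (h₂ : IsPMF μ₂) {p : ℤ × ℤ}
    (hp : monotoneCoupling (· ≤ ·) μ₁ μ₂ p ≠ 0) :
    μ₁ p.1 ≠ 0 ∧ μ₂ p.2 ≠ 0 := by
  obtain ⟨x, y⟩ := p
  rw [coupling_eq h₁ h₂] at hp
  have hlt : max (cdf (· ≤ ·) μ₁ (x-1)) (cdf (· ≤ ·) μ₂ (y-1)) <
      min (cdf (· ≤ ·) μ₁ x) (cdf (· ≤ ·) μ₂ y) := by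
    by_contra hle
    push_neg at hle
    rw [max_eq_right (by linarith)] at hp
    exact hp rfl
  have e1 := cdf_succ h₁ x
  have e2 := cdf_succ h₂ y
  constructor
  · have : cdf (· ≤ ·) μ₁ (x-1) < cdf (· ≤ ·) μ₁ x :=
      lt_of_le_of_lt (le_max_left _ _) (lt_of_lt_of_le hlt (min_le_left _ _))
    intro h0; rw [h0] at e1; linarith
  · have : cdf (· ≤ ·) μ₂ (y-1) < cdf (· ≤ ·) μ₂ y :=
      lt_of_le_of_lt (le_max_right _ _) (lt_of_lt_of_le hlt (min_le_right _ _))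
    intro h0; rw [h0] at e2; linarith

lemma pi_cross (h₁ : IsPMF μ₁) (h₂ : IsPMF μ₂) {x y x' y' : ℤ}
    (hp : monotoneCoupling (· ≤ ·) μ₁ μ₂ (x,y) ≠ 0)
    (hq : monotoneCoupling (· ≤ ·) μ₁ μ₂ (x',y') ≠ 0) (hx : x < x') (hy : y' < y) : False := by
  rw [coupling_eq h₁ h₂] at hp hq
  have hlt1 : max (cdf (· ≤ ·) μ₁ (x-1)) (cdf (· ≤ ·) μ₂ (y-1)) <
      min (cdf (· ≤ ·) μ₁ x) (cdf (· ≤ ·) μ₂ y) := by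
    by_contra hle; push_neg at hle
    rw [max_eq_right (by linarith)] at hp; exact hp rfl
  have hlt2 : max (cdf (· ≤ ·) μ₁ (x'-1)) (cdf (· ≤ ·) μ₂ (y'-1)) <
      min (cdf (· ≤ ·) μ₁ x') (cdf (· ≤ ·) μ₂ y') := by
    by_contra hle; push_neg at hle
    rw [max_eq_right (by linarith)] at hq; exact hq rfl
  have k1 : cdf (· ≤ ·) μ₂ (y-1) < cdf (· ≤ ·) μ₁ x :=
    lt_of_le_of_lt (le_max_right _ _) (lt_of_lt_of_le hlt1 (min_le_left _ _))
  have k2 : cdf (· ≤ ·) μ₁ (x'-1) < cdf (· ≤ ·) μ₂ y' :=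
    lt_of_le_of_lt (le_max_left _ _) (lt_of_lt_of_le hlt2 (min_le_right _ _))
  have k3 : cdf (· ≤ ·) μ₁ x ≤ cdf (· ≤ ·) μ₁ (x'-1) := cdf_mono h₁ (by omega)
  have k4 : cdf (· ≤ ·) μ₂ y' ≤ cdf (· ≤ ·) μ₂ (y-1) := cdf_mono h₂ (by omega)
  linarith

lemma level1_eq (h₁ : IsPMF μ₁) (x : ℤ) :
    {t : ℝ | genInv (· ≤ ·) μ₁ t = x} ∩ Ioo (0:ℝ) 1 =
      Ioc (cdf (· ≤ ·) μ₁ (x-1)) (cdf (· ≤ ·) μ₁ x) ∩ Ioo (0:ℝ) 1 := by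
  ext t
  simp only [Set.mem_inter_iff, Set.mem_setOf_eq, Set.mem_Ioo, Set.mem_Ioc, and_congr_left_iff]
  intro ht
  rw [genInv_eq_iff h₁ ht.1 ht.2.le]

lemma marg_fst (h₁ : IsPMF μ₁) (h₂ : IsPMF μ₂) (x : ℤ) :
    μ₁ x = ∑ y ∈ h₂.2.1.toFinset, monotoneCoupling (· ≤ ·) μ₁ μ₂ (x, y) := by
  classical
  have hunion : {t : ℝ | genInv (· ≤ ·) μ₁ t = x} ∩ Ioo (0:ℝ) 1 =
      ⋃ y ∈ h₂.2.1.toFinset,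
        ({t : ℝ | genInv (· ≤ ·) μ₁ t = x ∧ genInv (· ≤ ·) μ₂ t = y} ∩ Ioo (0:ℝ) 1) := by
    ext t
    simp only [Set.mem_inter_iff, Set.mem_setOf_eq, Set.mem_iUnion, exists_prop]
    constructor
    · rintro ⟨hg, ht⟩
      refine ⟨genInv (· ≤ ·) μ₂ t, ?_, ⟨hg, rfl⟩, ht⟩
      have hc := (genInv_eq_iff h₂ ht.1 ht.2.le (genInv (· ≤ ·) μ₂ t)).mp rfl
      rw [Set.Finite.mem_toFinset, mem_support]
      have e2 := cdf_succ h₂ (genInv (· ≤ ·) μ₂ t)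
      intro h0
      rw [h0] at e2
      have := hc.1
      have := hc.2
      linarith
    · rintro ⟨y, _, ⟨hg, _⟩, ht⟩
      exact ⟨hg, ht⟩
  have hdisj : (↑(h₂.2.1.toFinset) : Set ℤ).PairwiseDisjoint
      (fun y => {t : ℝ | genInv (· ≤ ·) μ₁ t = x ∧ genInv (· ≤ ·) μ₂ t = y} ∩ Ioo (0:ℝ) 1) := by
    intro y1 _ y2 _ hne
    refine Set.disjoint_left.mpr ?_
    rintro t ⟨⟨_, h2⟩, _⟩ ⟨⟨_, h2'⟩, _⟩
    exact hne (h2 ▸ h2')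
  have hmeas : ∀ y ∈ h₂.2.1.toFinset, MeasurableSet
      ({t : ℝ | genInv (· ≤ ·) μ₁ t = x ∧ genInv (· ≤ ·) μ₂ t = y} ∩ Ioo (0:ℝ) 1) := by
    intro y _
    rw [level_eq h₁ h₂]
    exact (measurableSet_Ioc).inter measurableSet_Ioo
  have hvol : volume ({t : ℝ | genInv (· ≤ ·) μ₁ t = x} ∩ Ioo (0:ℝ) 1) =
      ∑ y ∈ h₂.2.1.toFinset,
        volume ({t : ℝ | genInv (· ≤ ·) μ₁ t = x ∧ genInv (· ≤ ·) μ₂ t = y} ∩ Ioo (0:ℝ) 1) := by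
    rw [hunion]
    exact measure_biUnion_finset hdisj hmeas
  have hfin : ∀ y ∈ h₂.2.1.toFinset,
      volume ({t : ℝ | genInv (· ≤ ·) μ₁ t = x ∧ genInv (· ≤ ·) μ₂ t = y} ∩ Ioo (0:ℝ) 1) ≠ ⊤ := by
    intro y _
    refine ne_top_of_le_ne_top ?_ (measure_mono Set.inter_subset_right)
    rw [Real.volume_Ioo]
    simp
  have hμx : μ₁ x = (volume ({t : ℝ | genInv (· ≤ ·) μ₁ t = x} ∩ Ioo (0:ℝ) 1)).toReal := by
    rw [level1_eq h₁, vol_Ioc_inter (cdf_nonneg h₁ _) (cdf_le_one h₁ _)]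
    have e1 := cdf_succ h₁ x
    have : μ₁ x ≥ 0 := h₁.1 x
    rw [max_eq_left (by linarith)]
    linarith
  rw [hμx, hvol, ENNReal.toReal_sum hfin]
  apply Finset.sum_congr rfl
  intro y _
  rw [monotoneCoupling, Measure.restrict_apply' measurableSet_Ioo]

lemma marg_snd (h₁ : IsPMF μ₁) (h₂ : IsPMF μ₂) (y : ℤ) :
    μ₂ y = ∑ x ∈ h₁.2.1.toFinset, monotoneCoupling (· ≤ ·) μ₁ μ₂ (x, y) := by
  classical
  have hunion : {t : ℝ | genInv (· ≤ ·) μ₂ t = y} ∩ Ioo (0:ℝ) 1 =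
      ⋃ x ∈ h₁.2.1.toFinset,
        ({t : ℝ | genInv (· ≤ ·) μ₁ t = x ∧ genInv (· ≤ ·) μ₂ t = y} ∩ Ioo (0:ℝ) 1) := by
    ext t
    simp only [Set.mem_inter_iff, Set.mem_setOf_eq, Set.mem_iUnion, exists_prop]
    constructor
    · rintro ⟨hg, ht⟩
      refine ⟨genInv (· ≤ ·) μ₁ t, ?_, ⟨rfl, hg⟩, ht⟩
      have hc := (genInv_eq_iff h₁ ht.1 ht.2.le (genInv (· ≤ ·) μ₁ t)).mp rfl
      rw [Set.Finite.mem_toFinset, mem_support]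
      have e2 := cdf_succ h₁ (genInv (· ≤ ·) μ₁ t)
      intro h0
      rw [h0] at e2
      have := hc.1
      have := hc.2
      linarith
    · rintro ⟨x, _, ⟨_, hg⟩, ht⟩
      exact ⟨hg, ht⟩
  have hdisj : (↑(h₁.2.1.toFinset) : Set ℤ).PairwiseDisjoint
      (fun x => {t : ℝ | genInv (· ≤ ·) μ₁ t = x ∧ genInv (· ≤ ·) μ₂ t = y} ∩ Ioo (0:ℝ) 1) := by
    intro x1 _ x2 _ hne
    refine Set.disjoint_left.mpr ?_
    rintro t ⟨⟨h2, _⟩, _⟩ ⟨⟨h2', _⟩, _⟩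
    exact hne (h2 ▸ h2')
  have hmeas : ∀ x ∈ h₁.2.1.toFinset, MeasurableSet
      ({t : ℝ | genInv (· ≤ ·) μ₁ t = x ∧ genInv (· ≤ ·) μ₂ t = y} ∩ Ioo (0:ℝ) 1) := by
    intro x _
    rw [level_eq h₁ h₂]
    exact (measurableSet_Ioc).inter measurableSet_Ioo
  have hvol : volume ({t : ℝ | genInv (· ≤ ·) μ₂ t = y} ∩ Ioo (0:ℝ) 1) =
      ∑ x ∈ h₁.2.1.toFinset,
        volume ({t : ℝ | genInv (· ≤ ·) μ₁ t = x ∧ genInv (· ≤ ·) μ₂ t = y} ∩ Ioo (0:ℝ) 1) := by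
    rw [hunion]
    exact measure_biUnion_finset hdisj hmeas
  have hfin : ∀ x ∈ h₁.2.1.toFinset,
      volume ({t : ℝ | genInv (· ≤ ·) μ₁ t = x ∧ genInv (· ≤ ·) μ₂ t = y} ∩ Ioo (0:ℝ) 1) ≠ ⊤ := by
    intro x _
    refine ne_top_of_le_ne_top ?_ (measure_mono Set.inter_subset_right)
    rw [Real.volume_Ioo]
    simp
  have hlevel2 : {t : ℝ | genInv (· ≤ ·) μ₂ t = y} ∩ Ioo (0:ℝ) 1 =
      Ioc (cdf (· ≤ ·) μ₂ (y-1)) (cdf (· ≤ ·) μ₂ y) ∩ Ioo (0:ℝ) 1 := by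
    ext t
    simp only [Set.mem_inter_iff, Set.mem_setOf_eq, Set.mem_Ioo, Set.mem_Ioc, and_congr_left_iff]
    intro ht
    rw [genInv_eq_iff h₂ ht.1 ht.2.le]
  have hμy : μ₂ y = (volume ({t : ℝ | genInv (· ≤ ·) μ₂ t = y} ∩ Ioo (0:ℝ) 1)).toReal := by
    rw [hlevel2, vol_Ioc_inter (cdf_nonneg h₂ _) (cdf_le_one h₂ _)]
    have e1 := cdf_succ h₂ y
    have : μ₂ y ≥ 0 := h₂.1 y
    rw [max_eq_left (by linarith)]
    linarith
  rw [hμy, hvol, ENNReal.toReal_sum hfin]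
  apply Finset.sum_congr rfl
  intro x _
  rw [monotoneCoupling, Measure.restrict_apply' measurableSet_Ioo]

end Coupling

noncomputable def WS (w : ℤ × ℤ → ℝ) (S : Finset (ℤ × ℤ)) (f : ℤ × ℤ → ℤ) (p : ℤ × ℤ) : ℝ :=
  ∑ q ∈ S.filter (fun q => f q = f p), w q

noncomputable def DS (w : ℤ × ℤ → ℝ) (S : Finset (ℤ × ℤ)) (f : ℤ × ℤ → ℤ) : ℝ :=
  ∑ p ∈ S, w p * (Real.log (WS w S f p) - Real.log (w p))

lemma WS_congr (w : ℤ × ℤ → ℝ) (S : Finset (ℤ × ℤ)) (f : ℤ × ℤ → ℤ) {p q : ℤ × ℤ}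
    (hpq : f p = f q) : WS w S f p = WS w S f q := by
  unfold WS
  congr 1
  apply filter_congr
  intro r _
  rw [hpq]

lemma WS_erase (w : ℤ × ℤ → ℝ) {S : Finset (ℤ × ℤ)} {p₀ : ℤ × ℤ} (hp₀ : p₀ ∈ S)
    (f : ℤ × ℤ → ℤ) : WS w S f p₀ = WS w (S.erase p₀) f p₀ + w p₀ := by
  unfold WS
  rw [filter_erase]
  exact (Finset.sum_erase_add (S.filter (fun q => f q = f p₀)) w
    (mem_filter.mpr ⟨hp₀, rfl⟩)).symm

lemma WS_nonneg (w : ℤ × ℤ → ℝ) (S : Finset (ℤ × ℤ)) (f : ℤ × ℤ → ℤ) (p : ℤ × ℤ)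
    (hw : ∀ q ∈ S, 0 ≤ w q) : 0 ≤ WS w S f p :=
  Finset.sum_nonneg fun q hq => hw q (mem_filter.mp hq).1

lemma WS_mem_le (w : ℤ × ℤ → ℝ) {S : Finset (ℤ × ℤ)} (f : ℤ × ℤ → ℤ) {p q : ℤ × ℤ}
    (hq : q ∈ S) (hfq : f q = f p) (hw : ∀ r ∈ S, 0 ≤ w r) : w q ≤ WS w S f p :=
  Finset.single_le_sum (fun r hr => hw r (mem_filter.mp hr).1)
    (mem_filter.mpr ⟨hq, hfq⟩)

lemma DS_erase (w : ℤ × ℤ → ℝ) {S : Finset (ℤ × ℤ)} {p₀ : ℤ × ℤ} (hp₀ : p₀ ∈ S)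
    (f : ℤ × ℤ → ℤ) :
    DS w S f = DS w (S.erase p₀) f
      + (WS w (S.erase p₀) f p₀) * (Real.log (WS w S f p₀) - Real.log (WS w (S.erase p₀) f p₀))
      + w p₀ * (Real.log (WS w S f p₀) - Real.log (w p₀)) := by
  classical
  set A := WS w S f p₀ with hA
  set A' := WS w (S.erase p₀) f p₀ with hA'
  have hstep : ∀ p ∈ S.erase p₀,
      w p * (Real.log (WS w S f p) - Real.log (w p)) =
      w p * (Real.log (WS w (S.erase p₀) f p) - Real.log (w p)) +
        (if f p = f p₀ then w p * (Real.log A - Real.log A') else 0) := by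
    intro p hp
    by_cases hfp : f p = f p₀
    · rw [if_pos hfp, WS_congr w S f hfp, WS_congr w (S.erase p₀) f hfp, ← hA, ← hA']
      ring
    · rw [if_neg hfp]
      have : WS w S f p = WS w (S.erase p₀) f p := by
        unfold WS
        rw [filter_erase, Finset.erase_eq_of_notMem]
        intro hmem
        exact hfp ((mem_filter.mp hmem).2 ▸ rfl)
      rw [this]
      ring
  have e1 : DS w S f = ∑ p ∈ S.erase p₀, w p * (Real.log (WS w S f p) - Real.log (w p))
      + w p₀ * (Real.log A - Real.log (w p₀)) := by
    rw [DS, ← Finset.sum_erase_add _ _ hp₀, hA]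
  rw [e1, Finset.sum_congr rfl hstep, Finset.sum_add_distrib]
  have e2 : ∑ p ∈ S.erase p₀, (if f p = f p₀ then w p * (Real.log A - Real.log A') else 0)
      = A' * (Real.log A - Real.log A') := by
    rw [← Finset.sum_filter, ← Finset.sum_mul]
    rfl
  rw [e2, DS]

lemma main_comb (w : ℤ × ℤ → ℝ) : ∀ (n : ℕ) (S : Finset (ℤ × ℤ)), S.card = n →
    (∀ p ∈ S, 0 < w p) →
    (∀ p ∈ S, ∀ q ∈ S, p.1 + p.2 = q.1 + q.2 → p = q) →
    (∀ p ∈ S, ∀ q ∈ S, q.1 + q.2 = p.1 + p.2 + 1 → p.1 = q.1 ∨ p.2 = q.2) →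
    DS w S (fun p : ℤ × ℤ => ⌊((p.1 + p.2 : ℤ) : ℚ) / 2⌋)
      + DS w S (fun p : ℤ × ℤ => ⌈((p.1 + p.2 : ℤ) : ℚ) / 2⌉)
    ≤ DS w S (fun p => p.1) + DS w S (fun p => p.2) := by
  intro n
  induction n with
  | zero =>
    intro S hS _ _ _
    rw [Finset.card_eq_zero] at hS
    subst hS
    simp [DS]
  | succ n IH =>
    intro S hS hw hinj hadj
    have hne : S.Nonempty := Finset.card_pos.mp (by omega)
    obtain ⟨p₀, hp₀, hmax⟩ := S.exists_max_image (fun p => p.1 + p.2) hne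
    set Tm : ℤ × ℤ → ℤ := fun p : ℤ × ℤ => ⌊((p.1 + p.2 : ℤ) : ℚ) / 2⌋ with hTm
    set Tp : ℤ × ℤ → ℤ := fun p : ℤ × ℤ => ⌈((p.1 + p.2 : ℤ) : ℚ) / 2⌉ with hTp
    set S' := S.erase p₀ with hS'
    have hsub : S' ⊆ S := Finset.erase_subset _ _
    have hw' : ∀ p ∈ S', 0 < w p := fun p hp => hw p (hsub hp)
    have hcard' : S'.card = n := by
      rw [hS', Finset.card_erase_of_mem hp₀, hS]
      rfl
    have IH' := IH S' hcard' hw' (fun p hp q hq => hinj p (hsub hp) q (hsub hq))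
      (fun p hp q hq => hadj p (hsub hp) q (hsub hq))
    have hw₀ : 0 < w p₀ := hw p₀ hp₀
    have dm := DS_erase w hp₀ Tm
    have dp := DS_erase w hp₀ Tp
    have d1 := DS_erase w hp₀ (fun p => p.1)
    have d2 := DS_erase w hp₀ (fun p => p.2)
    rw [WS_erase w hp₀ Tm] at dm
    rw [WS_erase w hp₀ Tp] at dp
    rw [WS_erase w hp₀ (fun p => p.1)] at d1
    rw [WS_erase w hp₀ (fun p => p.2)] at d2
    have hnn1 : 0 ≤ WS w S' (fun p : ℤ × ℤ => p.1) p₀ :=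
      WS_nonneg w S' _ p₀ (fun q hq => (hw' q hq).le)
    have hnn2 : 0 ≤ WS w S' (fun p : ℤ × ℤ => p.2) p₀ :=
      WS_nonneg w S' _ p₀ (fun q hq => (hw' q hq).le)
    have hdel1 := delta_nonneg hw₀ hnn1
    have hdel2 := delta_nonneg hw₀ hnn2
    have hqlt : ∀ q ∈ S', q.1 + q.2 < p₀.1 + p₀.2 := by
      intro q hq
      have h1 := hmax q (hsub hq)
      have h2 : q ≠ p₀ := Finset.ne_of_mem_erase hq
      rcases lt_or_eq_of_le h1 with hc | hc
      · exact hc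
      · exact absurd (hinj q (hsub hq) p₀ hp₀ hc) h2
    have hfl0 : p₀.1 + p₀.2 = 2 * (Tm p₀) ∨ p₀.1 + p₀.2 = 2 * (Tm p₀) + 1 :=
      (floor_half _ _).mp rfl
    have hce0 : p₀.1 + p₀.2 = 2 * (Tp p₀) ∨ p₀.1 + p₀.2 = 2 * (Tp p₀) - 1 :=
      (ceil_half _ _).mp rfl
    have hflo : ∀ q ∈ S', Tm q = Tm p₀ →
        q.1 + q.2 = p₀.1 + p₀.2 - 1 ∧ p₀.1 + p₀.2 = 2 * (Tm p₀) + 1 := by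
      intro q hq hTmq
      have h1 : q.1 + q.2 = 2 * (Tm p₀) ∨ q.1 + q.2 = 2 * (Tm p₀) + 1 :=
        (floor_half _ _).mp hTmq
      have := hqlt q hq
      omega
    have hcei : ∀ q ∈ S', Tp q = Tp p₀ →
        q.1 + q.2 = p₀.1 + p₀.2 - 1 ∧ p₀.1 + p₀.2 = 2 * (Tp p₀) := by
      intro q hq hTpq
      have h1 : q.1 + q.2 = 2 * (Tp p₀) ∨ q.1 + q.2 = 2 * (Tp p₀) - 1 :=
        (ceil_half _ _).mp hTpq
      have := hqlt q hq
      omega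
    have hzfib : ∀ g : ℤ × ℤ → ℤ, (∀ q ∈ S', g q ≠ g p₀) → WS w S' g p₀ = 0 := by
      intro g hg
      unfold WS
      rw [Finset.filter_false_of_mem, Finset.sum_empty]
      exact fun q hq => hg q hq
    by_cases hpar : ∃ p₁ ∈ S', p₁.1 + p₁.2 = p₀.1 + p₀.2 - 1
    · obtain ⟨p₁, hp₁, hs₁⟩ := hpar
      have hw₁ : 0 < w p₁ := hw' p₁ hp₁
      have hmatch : p₁.1 = p₀.1 ∨ p₁.2 = p₀.2 :=
        hadj p₁ (hsub hp₁) p₀ hp₀ (by omega)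
      have honefib : ∀ g : ℤ × ℤ → ℤ, (∀ q ∈ S', (g q = g p₀ ↔ q = p₁)) →
          WS w S' g p₀ = w p₁ := by
        intro g hg
        unfold WS
        have : S'.filter (fun q => g q = g p₀) = {p₁} := by
          ext q
          simp only [Finset.mem_filter, Finset.mem_singleton]
          constructor
          · rintro ⟨hq, hgq⟩
            exact (hg q hq).mp hgq
          · rintro rfl
            exact ⟨hp₁, (hg q (by exact hp₁)).mpr rfl⟩
        rw [this, Finset.sum_singleton]
      rcases Int.even_or_odd (p₀.1 + p₀.2) with ⟨k, hk⟩ | ⟨k, hk⟩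
      · -- even: floor fiber empty, ceil fiber = {p₁}
        have hm0 : WS w S' Tm p₀ = 0 := by
          apply hzfib
          intro q hq hTmq
          have := hflo q hq hTmq
          omega
        have hp1 : WS w S' Tp p₀ = w p₁ := by
          apply honefib
          intro q hq
          constructor
          · intro hTpq
            have h3 := hcei q hq hTpq
            exact hinj q (hsub hq) p₁ (hsub hp₁) (by omega)
          · rintro rfl
            apply (ceil_half _ _).mpr
            omega
        rw [hm0] at dm
        rw [hp1] at dp
        have em : DS w S Tm = DS w S' Tm := by
          rw [dm, zero_add]
          ring
        rcases hmatch with hco | hco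
        · have hble : w p₁ ≤ WS w S' (fun p : ℤ × ℤ => p.1) p₀ :=
            WS_mem_le w _ hp₁ hco (fun r hr => (hw' r hr).le)
          have hge := delta_ge hw₀ hw₁ hble
          linarith
        · have hble : w p₁ ≤ WS w S' (fun p : ℤ × ℤ => p.2) p₀ :=
            WS_mem_le w _ hp₁ hco (fun r hr => (hw' r hr).le)
          have hge := delta_ge hw₀ hw₁ hble
          linarith
      · -- odd: ceil fiber empty, floor fiber = {p₁}
        have hm0 : WS w S' Tp p₀ = 0 := by
          apply hzfib
          intro q hq hTpq
          have := hcei q hq hTpq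
          omega
        have hp1 : WS w S' Tm p₀ = w p₁ := by
          apply honefib
          intro q hq
          constructor
          · intro hTmq
            have h3 := hflo q hq hTmq
            exact hinj q (hsub hq) p₁ (hsub hp₁) (by omega)
          · rintro rfl
            apply (floor_half _ _).mpr
            omega
        rw [hm0] at dp
        rw [hp1] at dm
        have ep : DS w S Tp = DS w S' Tp := by
          rw [dp, zero_add]
          ring
        rcases hmatch with hco | hco
        · have hble : w p₁ ≤ WS w S' (fun p : ℤ × ℤ => p.1) p₀ :=
            WS_mem_le w _ hp₁ hco (fun r hr => (hw' r hr).le)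
          have hge := delta_ge hw₀ hw₁ hble
          linarith
        · have hble : w p₁ ≤ WS w S' (fun p : ℤ × ℤ => p.2) p₀ :=
            WS_mem_le w _ hp₁ hco (fun r hr => (hw' r hr).le)
          have hge := delta_ge hw₀ hw₁ hble
          linarith
    · -- no partner: both fibers empty
      push_neg at hpar
      have hm0 : WS w S' Tm p₀ = 0 := by
        apply hzfib
        intro q hq hTmq
        exact absurd (hflo q hq hTmq).1 (by exact fun hc => (by exact hpar q hq hc))
      have hp0 : WS w S' Tp p₀ = 0 := by
        apply hzfib
        intro q hq hTpq
        exact absurd (hcei q hq hTpq).1 (by exact fun hc => (by exact hpar q hq hc))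
      rw [hm0] at dm
      rw [hp0] at dp
      have em : DS w S Tm = DS w S' Tm := by
        rw [dm, zero_add]; ring
      have ep : DS w S Tp = DS w S' Tp := by
        rw [dp, zero_add]; ring
      linarith

lemma relEntropy_eq_sum (ν : ℤ → ℝ) (Z : Finset ℤ) (hZ : Function.support ν ⊆ ↑Z) :
    relEntropy ν = ∑ z ∈ Z, ν z * Real.log (ν z) := by
  apply finsum_eq_sum_of_support_subset
  intro z hz
  apply hZ
  simp only [Function.mem_support] at hz ⊢
  intro h0
  rw [h0] at hz
  simp at hz

lemma sum_fiber_log (S : Finset (ℤ × ℤ)) (w : ℤ × ℤ → ℝ) (f : ℤ × ℤ → ℤ) (Z : Finset ℤ)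
    (hmaps : ∀ p ∈ S, f p ∈ Z) (ν : ℤ → ℝ)
    (hν : ∀ z ∈ Z, ν z = ∑ p ∈ S.filter (fun p => f p = z), w p) :
    ∑ z ∈ Z, ν z * Real.log (ν z) = ∑ p ∈ S, w p * Real.log (ν (f p)) := by
  classical
  rw [← Finset.sum_fiberwise_of_maps_to hmaps (fun p => w p * Real.log (ν (f p)))]
  apply Finset.sum_congr rfl
  intro z hz
  have : ∀ p ∈ S.filter (fun p => f p = z), w p * Real.log (ν (f p)) = w p * Real.log (ν z) := by
    intro p hp
    rw [(Finset.mem_filter.mp hp).2]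
  rw [Finset.sum_congr rfl this, ← Finset.sum_mul, ← hν z hz]

end GRST

/-- **Theorem 8 of Gozlan–Roberto–Samson–Tetali.** If `π` is the monotone coupling of two
finitely supported probability measures `μ₁, μ₂` on `ℤ` and `μ∓` are the push-forwards of
`π` by `(x,y) ↦ ⌊(x+y)/2⌋` and `(x,y) ↦ ⌈(x+y)/2⌉`, then
`H(μ₁|m) + H(μ₂|m) ≥ H(μ₋|m) + H(μ₊|m)`. -/
theorem entropy_midpoint_int (μ₁ μ₂ : ℤ → ℝ) (h₁ : IsPMF μ₁) (h₂ : IsPMF μ₂) :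
    relEntropy μ₁ + relEntropy μ₂ ≥
      relEntropy (pushforward (fun p : ℤ × ℤ => ⌊((p.1 + p.2 : ℤ) : ℚ) / 2⌋)
        (monotoneCoupling (· ≤ ·) μ₁ μ₂)) +
      relEntropy (pushforward (fun p : ℤ × ℤ => ⌈((p.1 + p.2 : ℤ) : ℚ) / 2⌉)
        (monotoneCoupling (· ≤ ·) μ₁ μ₂)) := by
  classical
  open GRST in
  set π := monotoneCoupling (· ≤ ·) μ₁ μ₂ with hπ
  set T₁ := h₁.2.1.toFinset with hT₁
  set T₂ := h₂.2.1.toFinset with hT₂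
  set S : Finset (ℤ × ℤ) := (T₁ ×ˢ T₂).filter (fun p => π p ≠ 0) with hS
  set Tm : ℤ × ℤ → ℤ := fun p : ℤ × ℤ => ⌊((p.1 + p.2 : ℤ) : ℚ) / 2⌋ with hTmdef
  set Tp : ℤ × ℤ → ℤ := fun p : ℤ × ℤ => ⌈((p.1 + p.2 : ℤ) : ℚ) / 2⌉ with hTpdef
  have hSmem : ∀ p : ℤ × ℤ, p ∈ S ↔ π p ≠ 0 := by
    intro p
    rw [hS, Finset.mem_filter, Finset.mem_product]
    constructor
    · exact fun h => h.2
    · intro hp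
      obtain ⟨m1, m2⟩ := GRST.pi_supp h₁ h₂ hp
      exact ⟨⟨h₁.2.1.mem_toFinset.mpr m1, h₂.2.1.mem_toFinset.mpr m2⟩, hp⟩
  -- pushforward evaluation
  have hpush : ∀ (f : ℤ × ℤ → ℤ) (z : ℤ),
      pushforward f π z = ∑ p ∈ S.filter (fun p => f p = z), π p := by
    intro f z
    apply finsum_mem_eq_sum_of_inter_support_eq
    ext p
    simp only [Set.mem_inter_iff, Set.mem_setOf_eq, Finset.coe_filter,
      Function.mem_support, Finset.mem_coe]
    constructor
    · rintro ⟨hfz, hne⟩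
      exact ⟨⟨(hSmem p).mpr hne, hfz⟩, hne⟩
    · rintro ⟨⟨_, hfz⟩, hne⟩
      exact ⟨hfz, hne⟩
  -- fiber sums are marginals
  have hfib1 : ∀ x : ℤ, (∑ p ∈ S.filter (fun p => p.1 = x), π p) = μ₁ x := by
    intro x
    by_cases hx : x ∈ T₁
    · have e0 : S.filter (fun p => p.1 = x)
          = ((T₁ ×ˢ T₂).filter (fun p => p.1 = x)).filter (fun p => π p ≠ 0) := by
        rw [hS, Finset.filter_comm]
      have e1 : (T₁ ×ˢ T₂).filter (fun p : ℤ × ℤ => p.1 = x) = {x} ×ˢ T₂ := by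
        ext p
        simp only [Finset.mem_filter, Finset.mem_product, Finset.mem_singleton]
        constructor
        · rintro ⟨⟨_, hp2⟩, hp1⟩
          exact ⟨hp1, hp2⟩
        · rintro ⟨hp1, hp2⟩
          exact ⟨⟨hp1 ▸ hx, hp2⟩, hp1⟩
      rw [e0, e1, Finset.sum_filter_ne_zero, Finset.sum_product, Finset.sum_singleton]
      exact (GRST.marg_fst h₁ h₂ x).symm
    · rw [Finset.sum_eq_zero, eq_comm]
      · by_contra hne
        exact hx (h₁.2.1.mem_toFinset.mpr hne)
      · intro p hp
        rw [Finset.mem_filter] at hp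
        exfalso
        apply hx
        have := (Finset.mem_filter.mp (hS ▸ hp.1)).1
        rw [Finset.mem_product] at this
        exact hp.2 ▸ this.1
  have hfib2 : ∀ y : ℤ, (∑ p ∈ S.filter (fun p => p.2 = y), π p) = μ₂ y := by
    intro y
    by_cases hy : y ∈ T₂
    · have e0 : S.filter (fun p => p.2 = y)
          = ((T₁ ×ˢ T₂).filter (fun p => p.2 = y)).filter (fun p => π p ≠ 0) := by
        rw [hS, Finset.filter_comm]
      have e1 : (T₁ ×ˢ T₂).filter (fun p : ℤ × ℤ => p.2 = y) = T₁ ×ˢ {y} := by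
        ext p
        simp only [Finset.mem_filter, Finset.mem_product, Finset.mem_singleton]
        constructor
        · rintro ⟨⟨hp1, _⟩, hp2⟩
          exact ⟨hp1, hp2⟩
        · rintro ⟨hp1, hp2⟩
          exact ⟨⟨hp1, hp2 ▸ hy⟩, hp2⟩
      rw [e0, e1, Finset.sum_filter_ne_zero, Finset.sum_product]
      simp only [Finset.sum_singleton]
      exact (GRST.marg_snd h₁ h₂ y).symm
    · rw [Finset.sum_eq_zero, eq_comm]
      · by_contra hne
        exact hy (h₂.2.1.mem_toFinset.mpr hne)
      · intro p hp
        rw [Finset.mem_filter] at hp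
        exfalso
        apply hy
        have := (Finset.mem_filter.mp (hS ▸ hp.1)).1
        rw [Finset.mem_product] at this
        exact hp.2 ▸ this.2
  -- entropies as sums over S
  have hE1 : relEntropy μ₁ = ∑ p ∈ S, π p * Real.log (μ₁ p.1) := by
    rw [GRST.relEntropy_eq_sum μ₁ T₁ (by rw [hT₁, Set.Finite.coe_toFinset])]
    apply GRST.sum_fiber_log S π (fun p => p.1) T₁
    · intro p hp
      have := (Finset.mem_filter.mp (hS ▸ hp)).1
      rw [Finset.mem_product] at this
      exact this.1
    · exact fun x _ => (hfib1 x).symm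
  have hE2 : relEntropy μ₂ = ∑ p ∈ S, π p * Real.log (μ₂ p.2) := by
    rw [GRST.relEntropy_eq_sum μ₂ T₂ (by rw [hT₂, Set.Finite.coe_toFinset])]
    apply GRST.sum_fiber_log S π (fun p => p.2) T₂
    · intro p hp
      have := (Finset.mem_filter.mp (hS ▸ hp)).1
      rw [Finset.mem_product] at this
      exact this.2
    · exact fun y _ => (hfib2 y).symm
  have hEpush : ∀ f : ℤ × ℤ → ℤ,
      relEntropy (pushforward f π) = ∑ p ∈ S, π p * Real.log (pushforward f π (f p)) := by
    intro f
    rw [GRST.relEntropy_eq_sum (pushforward f π) (S.image f) ?_]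
    · apply GRST.sum_fiber_log S π f (S.image f)
      · exact fun p hp => Finset.mem_image_of_mem f hp
      · exact fun z _ => hpush f z
    · intro z hz
      rw [Function.mem_support, hpush f z] at hz
      obtain ⟨p, hp, hpne⟩ := Finset.exists_ne_zero_of_sum_ne_zero hz
      rw [Finset.coe_image, Set.mem_image]
      exact ⟨p, (Finset.mem_filter.mp hp).1, (Finset.mem_filter.mp hp).2⟩
  -- identification with WS
  have hWfst : ∀ p : ℤ × ℤ, GRST.WS π S (fun p => p.1) p = μ₁ p.1 := fun p => hfib1 p.1
  have hWsnd : ∀ p : ℤ × ℤ, GRST.WS π S (fun p => p.2) p = μ₂ p.2 := fun p => hfib2 p.2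
  have hWf : ∀ (f : ℤ × ℤ → ℤ) (p : ℤ × ℤ), GRST.WS π S f p = pushforward f π (f p) :=
    fun f p => (hpush f (f p)).symm
  -- convert each entropy to DS + E
  set E : ℝ := ∑ p ∈ S, π p * Real.log (π p) with hEdef
  have conv : ∀ (f : ℤ × ℤ → ℤ) (ν : ℤ → ℝ), (∀ p : ℤ × ℤ, GRST.WS π S f p = ν (f p)) →
      ∑ p ∈ S, π p * Real.log (ν (f p)) = GRST.DS π S f + E := by
    intro f ν hWν
    rw [GRST.DS, hEdef, ← Finset.sum_add_distrib]
    apply Finset.sum_congr rfl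
    intro p hp
    rw [← hWν p]
    ring
  -- chain facts
  have hchain : ∀ p q : ℤ × ℤ, π p ≠ 0 → π q ≠ 0 → p.1 < q.1 → q.2 < p.2 → False := by
    rintro ⟨x, y⟩ ⟨x', y'⟩ hp hq hlt hlt'
    exact GRST.pi_cross h₁ h₂ hp hq hlt hlt'
  have hinj : ∀ p ∈ S, ∀ q ∈ S, p.1 + p.2 = q.1 + q.2 → p = q := by
    intro p hp q hq hsum
    have hp' := (hSmem p).mp hp
    have hq' := (hSmem q).mp hq
    rcases lt_trichotomy p.1 q.1 with hc | hc | hc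
    · exact absurd (hchain p q hp' hq' hc (by omega)) (fun h => h)
    · exact Prod.ext hc (by omega)
    · exact absurd (hchain q p hq' hp' hc (by omega)) (fun h => h)
  have hadj : ∀ p ∈ S, ∀ q ∈ S, q.1 + q.2 = p.1 + p.2 + 1 → p.1 = q.1 ∨ p.2 = q.2 := by
    intro p hp q hq hsum
    have hp' := (hSmem p).mp hp
    have hq' := (hSmem q).mp hq
    by_contra hcon
    push_neg at hcon
    rcases lt_trichotomy p.1 q.1 with hc | hc | hc
    · rcases lt_trichotomy p.2 q.2 with hd | hd | hd
      · omega
      · exact hcon.2 hd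
      · exact hchain p q hp' hq' hc hd
    · exact hcon.1 hc
    · rcases lt_trichotomy p.2 q.2 with hd | hd | hd
      · exact hchain q p hq' hp' hc hd
      · exact hcon.2 hd
      · omega
  have hwpos : ∀ p ∈ S, 0 < π p := by
    intro p hp
    exact lt_of_le_of_ne (GRST.pi_nonneg p) (Ne.symm ((hSmem p).mp hp))
  have hmain := GRST.main_comb π S.card S rfl hwpos hinj hadj
  -- final rewriting
  rw [ge_iff_le, hE1, hE2, hEpush Tm, hEpush Tp,
    conv (fun p => p.1) μ₁ hWfst, conv (fun p => p.2) μ₂ hWsnd,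
    conv Tm (pushforward Tm π) (hWf Tm), conv Tp (pushforward Tp π) (hWf Tp)]
  linarith
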